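/- There exists a linear system with convex input constraints, a convex target set R, and points x1, x2 each of which is steered to R in (possibly different) finite numbers of steps k1 ≠ k2 under feasible inputs, such that some convex combination of x1 and x2 cannot be steered to R in any finite number of steps. Equivalently, the union over k of the k-step controllable sets to R need not be convex. -/
import Mathlib


/-- The `k`-step controllable set without state constraints:
`K 0 = R`, `K (j+1) = {x : ∃ u ∈ U, Ax + Bu ∈ K j}`. -/
def ctrlSetFree {n m : ℕ} (A : Matrix (Fin n) (Fin n) ℝ) (B : Matrix (Fin n) (Fin m) ℝ)
    (U : Set (Fin m → ℝ)) (R : Set (Fin n → ℝ)) : ℕ → Set (Fin n → ℝ)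
  | 0 => R
  | j + 1 => {x : Fin n → ℝ | ∃ u ∈ U, A.mulVec x + B.mulVec u ∈ ctrlSetFree A B U R j}

lemma ctrl_char (k : ℕ) (x : Fin 1 → ℝ) :
    x ∈ ctrlSetFree (Matrix.of fun _ _ => (2:ℝ)) (0 : Matrix (Fin 1) (Fin 1) ℝ)
      ({0} : Set (Fin 1 → ℝ)) ({y : Fin 1 → ℝ | y 0 = 1}) k ↔ x 0 = (1/2:ℝ)^k := by
  induction k generalizing x with
  | zero => simp [ctrlSetFree]
  | succ j ih =>
    simp only [ctrlSetFree, Set.mem_setOf_eq, Set.mem_singleton_iff, exists_eq_left,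
      Matrix.zero_mulVec, add_zero, ih]
    simp only [Matrix.mulVec, dotProduct, Fin.sum_univ_one, Matrix.of_apply]
    rw [pow_succ]
    constructor
    · intro h; nlinarith
    · intro h; nlinarith

theorem stmt7 :
    ∃ (n m : ℕ) (A : Matrix (Fin n) (Fin n) ℝ) (B : Matrix (Fin n) (Fin m) ℝ)
      (U : Set (Fin m → ℝ)) (R : Set (Fin n → ℝ)),
      Convex ℝ U ∧ Convex ℝ R ∧
      ¬ Convex ℝ (⋃ k : ℕ, ctrlSetFree A B U R k) := by
  refine ⟨1, 1, Matrix.of fun _ _ => (2:ℝ), 0, {0}, {y : Fin 1 → ℝ | y 0 = 1},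
    convex_singleton _, ?_, ?_⟩
  · intro a ha b hb s t hs ht hst
    simp only [Set.mem_setOf_eq] at *
    simp [ha, hb, hst]
  · intro hcvx
    have h1 : (fun _ => (1:ℝ)) ∈ ⋃ k : ℕ, ctrlSetFree (Matrix.of fun _ _ => (2:ℝ))
        (0 : Matrix (Fin 1) (Fin 1) ℝ) ({0} : Set (Fin 1 → ℝ)) {y : Fin 1 → ℝ | y 0 = 1} k := by
      exact Set.mem_iUnion.2 ⟨0, (ctrl_char 0 _).2 (by norm_num)⟩
    have h2 : (fun _ => (1/2:ℝ)) ∈ ⋃ k : ℕ, ctrlSetFree (Matrix.of fun _ _ => (2:ℝ))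
        (0 : Matrix (Fin 1) (Fin 1) ℝ) ({0} : Set (Fin 1 → ℝ)) {y : Fin 1 → ℝ | y 0 = 1} k := by
      exact Set.mem_iUnion.2 ⟨1, (ctrl_char 1 _).2 (by norm_num)⟩
    have := hcvx h1 h2 (by norm_num : (0:ℝ) ≤ (1/2:ℝ)) (by norm_num : (0:ℝ) ≤ (1/2:ℝ))
      (by norm_num)
    rw [Set.mem_iUnion] at this
    obtain ⟨k, hk⟩ := this
    rw [ctrl_char k] at hk
    simp only [Pi.add_apply, Pi.smul_apply, smul_eq_mul] at hk
    have hk' : (3/4 : ℝ) = (1/2:ℝ)^k := by linarith [hk]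
    rcases k with _ | _ | k
    · norm_num at hk'
    · norm_num at hk'
    · have : (1/2:ℝ)^(k+2) ≤ (1/2:ℝ)^2 := by
        apply pow_le_pow_of_le_one (by norm_num) (by norm_num); omega
      norm_num at this
      linarith
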